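/- The number of rooted labeled forests on n vertices (with any number of components) equals (n+1)^{n-1}, i.e., ∑_{k=0}^{n} t_{n,k} = (n+1)^{n-1}, where t_{n,k} is the number of rooted forests on n labeled vertices with k rooted trees. -/

import Mathlib

open SimpleGraph

namespace StmtAux

variable {n : ℕ}

def step (p : Fin n → Fin (n+1)) : Fin (n+1) → Fin (n+1) :=
  Fin.lastCases (Fin.last n) (fun v => p v)

@[simp] lemma step_last (p : Fin n → Fin (n+1)) : step p (Fin.last n) = Fin.last n :=
  Fin.lastCases_last

@[simp] lemma step_castSucc (p : Fin n → Fin (n+1)) (v : Fin n) :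
    step p (Fin.castSucc v) = p v :=
  Fin.lastCases_castSucc v

def Treeish (p : Fin n → Fin (n+1)) : Prop :=
  ∀ v : Fin (n+1), ∃ k, (step p)^[k] v = Fin.last n

variable {p : Fin n → Fin (n+1)}

noncomputable def depth (hp : Treeish p) (v : Fin (n+1)) : ℕ :=
  Nat.find (hp v)

lemma iterate_depth (hp : Treeish p) (v : Fin (n+1)) :
    (step p)^[depth hp v] v = Fin.last n := Nat.find_spec (hp v)

lemma depth_le (hp : Treeish p) {v : Fin (n+1)} {k : ℕ}
    (h : (step p)^[k] v = Fin.last n) : depth hp v ≤ k := Nat.find_min' (hp v) h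

lemma iterate_ne_last (hp : Treeish p) {v : Fin (n+1)} {k : ℕ} (h : k < depth hp v) :
    (step p)^[k] v ≠ Fin.last n := Nat.find_min (hp v) h

@[simp] lemma depth_last (hp : Treeish p) : depth hp (Fin.last n) = 0 := by
  simpa [depth, Nat.find_eq_zero] using rfl

lemma depth_pos (hp : Treeish p) {v : Fin (n+1)} (h : v ≠ Fin.last n) :
    0 < depth hp v := by
  rcases Nat.eq_zero_or_pos (depth hp v) with h0 | h0
  · exact absurd (by simpa [h0] using iterate_depth hp v) h
  · exact h0

lemma depth_step (hp : Treeish p) {v : Fin (n+1)} (h : v ≠ Fin.last n) :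
    depth hp (step p v) + 1 = depth hp v := by
  have hpos := depth_pos hp h
  have h1 : depth hp v ≤ depth hp (step p v) + 1 := by
    apply depth_le
    rw [Function.iterate_succ_apply]
    exact iterate_depth hp (step p v)
  have h2 : depth hp (step p v) + 1 ≤ depth hp v := by
    by_contra hlt
    push_neg at hlt
    have : depth hp v - 1 < depth hp (step p v) := by omega
    refine iterate_ne_last hp this ?_
    have : (step p)^[depth hp v - 1] (step p v) = (step p)^[depth hp v] v := by
      rw [← Function.iterate_succ_apply]
      congr 1
      omega
    rw [this]
    exact iterate_depth hp v
  omega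

lemma castSucc_ne_last (v : Fin n) : Fin.castSucc v ≠ Fin.last n :=
  Fin.ne_of_lt (Fin.castSucc_lt_last v)

/-- depth of a real vertex -/
noncomputable def gdepth (hp : Treeish p) (v : Fin n) : ℕ := depth hp (Fin.castSucc v)

lemma gdepth_pos (hp : Treeish p) (v : Fin n) : 0 < gdepth hp v :=
  depth_pos hp (castSucc_ne_last v)

lemma gdepth_parent (hp : Treeish p) {v : Fin n} (h : p v ≠ Fin.last n) :
    gdepth hp ((p v).castPred h) + 1 = gdepth hp v := by
  have := depth_step hp (castSucc_ne_last v)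
  rwa [step_castSucc, ← Fin.castSucc_castPred (p v) h] at this

def graph (p : Fin n → Fin (n+1)) : SimpleGraph (Fin n) where
  Adj v w := v ≠ w ∧ (p v = Fin.castSucc w ∨ p w = Fin.castSucc v)
  symm := ⟨by intro v w ⟨h1, h2⟩; exact ⟨h1.symm, h2.symm⟩⟩
  loopless := ⟨by intro v ⟨h1, _⟩; exact h1 rfl⟩

lemma graph_adj {p : Fin n → Fin (n+1)} {v w : Fin n} :
    (graph p).Adj v w ↔ v ≠ w ∧ (p v = Fin.castSucc w ∨ p w = Fin.castSucc v) := Iff.rfl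

def roots (p : Fin n → Fin (n+1)) : Finset (Fin n) :=
  Finset.univ.filter (fun v => p v = Fin.last n)

@[simp] lemma mem_roots {p : Fin n → Fin (n+1)} {v : Fin n} :
    v ∈ roots p ↔ p v = Fin.last n := by simp [roots]

noncomputable def rootF (hp : Treeish p) (v : Fin n) : Fin (n+1) :=
  (step p)^[gdepth hp v - 1] (Fin.castSucc v)

lemma rootF_ne_last (hp : Treeish p) (v : Fin n) : rootF hp v ≠ Fin.last n := by
  have h := gdepth_pos hp v
  exact iterate_ne_last hp (show gdepth hp v - 1 < depth hp v.castSucc by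
    simp only [gdepth] at *; omega)

noncomputable def rootFin (hp : Treeish p) (v : Fin n) : Fin n :=
  (rootF hp v).castPred (rootF_ne_last hp v)

@[simp] lemma castSucc_rootFin (hp : Treeish p) (v : Fin n) :
    Fin.castSucc (rootFin hp v) = rootF hp v := Fin.castSucc_castPred _ _

lemma p_rootFin (hp : Treeish p) (v : Fin n) : p (rootFin hp v) = Fin.last n := by
  have : step p (rootF hp v) = Fin.last n := by
    have h2 : step p (rootF hp v)
        = (step p)^[gdepth hp v - 1 + 1] (Fin.castSucc v) :=
      (Function.iterate_succ_apply' _ _ _).symm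
    have h3 : gdepth hp v - 1 + 1 = gdepth hp v := by have := gdepth_pos hp v; omega
    rw [h2, h3]
    exact iterate_depth hp _
  rwa [← castSucc_rootFin hp v, step_castSucc] at this

lemma rootFin_mem_roots (hp : Treeish p) (v : Fin n) : rootFin hp v ∈ roots p := by
  simp [p_rootFin hp v]

lemma rootFin_of_root (hp : Treeish p) {v : Fin n} (h : p v = Fin.last n) :
    rootFin hp v = v := by
  have hd : gdepth hp v = 1 := by
    have h1 : gdepth hp v ≤ 1 := depth_le hp (by simp [h])
    have := gdepth_pos hp v
    omega
  have : rootF hp v = Fin.castSucc v := by rw [rootF, hd]; simp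
  simp [rootFin, this]

lemma rootF_parent (hp : Treeish p) {v : Fin n} (h : p v ≠ Fin.last n) :
    rootF hp v = rootF hp ((p v).castPred h) := by
  set u := (p v).castPred h with hu
  have hdu : gdepth hp u + 1 = gdepth hp v := gdepth_parent hp h
  have hdupos := gdepth_pos hp u
  rw [rootF, rootF, ← hdu]
  have h1 : gdepth hp u + 1 - 1 = (gdepth hp u - 1) + 1 := by omega
  rw [h1, Function.iterate_succ_apply, step_castSucc]
  rw [hu, Fin.castSucc_castPred]

lemma rootFin_parent (hp : Treeish p) {v : Fin n} (h : p v ≠ Fin.last n) :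
    rootFin hp v = rootFin hp ((p v).castPred h) := by
  simp only [rootFin]
  congr 1
  exact rootF_parent hp h

lemma rootFin_adj (hp : Treeish p) {v w : Fin n} (h : (graph p).Adj v w) :
    rootFin hp v = rootFin hp w := by
  rcases h.2 with h2 | h2
  · have hne : p v ≠ Fin.last n := by rw [h2]; exact castSucc_ne_last w
    have := rootFin_parent hp hne
    rwa [show (p v).castPred hne = w by simp [h2]] at this
  · have hne : p w ≠ Fin.last n := by rw [h2]; exact castSucc_ne_last v
    have := rootFin_parent hp hne
    rw [show (p w).castPred hne = v by simp [h2]] at this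
    exact this.symm

lemma rootFin_walk (hp : Treeish p) {v w : Fin n} (q : (graph p).Walk v w) :
    rootFin hp v = rootFin hp w := by
  induction q with
  | nil => rfl
  | cons h q ih => exact (rootFin_adj hp h).trans ih

lemma exists_chain (hp : Treeish p) (v : Fin n) :
    ∃ w : (graph p).Walk v (rootFin hp v), w.IsPath ∧
      (∀ x ∈ w.support, gdepth hp x ≤ gdepth hp v) ∧
      (∀ h : p v ≠ Fin.last n, w.getVert 1 = (p v).castPred h) := by
  generalize hk : gdepth hp v = k
  induction k using Nat.strong_induction_on generalizing v with
  | _ k ih =>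
  by_cases hv : p v = Fin.last n
  · have hroot : rootFin hp v = v := rootFin_of_root hp hv
    refine ⟨SimpleGraph.Walk.nil.copy rfl hroot.symm, ?_, ?_, ?_⟩
    · simp
    · intro x hx
      simp only [SimpleGraph.Walk.support_copy, SimpleGraph.Walk.support_nil,
        List.mem_singleton] at hx
      subst hx; omega
    · intro h; exact absurd hv h
  · set u := (p v).castPred hv with hu
    have hdu : gdepth hp u + 1 = gdepth hp v := gdepth_parent hp hv
    have hlt : gdepth hp u < k := by omega
    obtain ⟨w', hw'path, hw'dep, _⟩ := ih _ hlt u rfl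
    have hadj : (graph p).Adj v u := by
      refine ⟨?_, Or.inl (by rw [hu, Fin.castSucc_castPred])⟩
      intro hvu
      rw [← hvu] at hdu
      omega
    have hroot : rootFin hp v = rootFin hp u := rootFin_parent hp hv
    refine ⟨(SimpleGraph.Walk.cons hadj w').copy rfl hroot.symm, ?_, ?_, ?_⟩
    · rw [SimpleGraph.Walk.isPath_copy, SimpleGraph.Walk.cons_isPath_iff]
      refine ⟨hw'path, fun hmem => ?_⟩
      have := hw'dep v hmem
      omega
    · intro x hx
      simp only [SimpleGraph.Walk.support_copy, SimpleGraph.Walk.support_cons,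
        List.mem_cons] at hx
      rcases hx with rfl | hx
      · omega
      · have := hw'dep x hx; omega
    · intro h
      simp only [SimpleGraph.Walk.getVert_copy]
      rw [SimpleGraph.Walk.getVert_cons _ _ (by norm_num)]
      simp [SimpleGraph.Walk.getVert_zero, hu]

lemma reachable_rootFin (hp : Treeish p) (v : Fin n) :
    (graph p).Reachable v (rootFin hp v) := by
  obtain ⟨w, _⟩ := exists_chain hp v
  exact ⟨w⟩

lemma rootFin_eq_of_mk_eq (hp : Treeish p) {v w : Fin n}
    (h : (graph p).connectedComponentMk v = (graph p).connectedComponentMk w) :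
    rootFin hp v = rootFin hp w := by
  obtain ⟨q⟩ := SimpleGraph.ConnectedComponent.exact h
  exact rootFin_walk hp q

lemma root_prop (hp : Treeish p) (c : (graph p).ConnectedComponent) :
    ∃! v, v ∈ roots p ∧ (graph p).connectedComponentMk v = c := by
  obtain ⟨w, hw⟩ := c.exists_rep
  refine ⟨rootFin hp w, ⟨rootFin_mem_roots hp w, ?_⟩, ?_⟩
  · rw [← hw]
    exact SimpleGraph.ConnectedComponent.sound (reachable_rootFin hp w).symm
  · rintro x ⟨hx1, hx2⟩
    have h1 : rootFin hp x = x := rootFin_of_root hp (mem_roots.mp hx1)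
    have h2 : (graph p).connectedComponentMk x = (graph p).connectedComponentMk w := by
      rw [hx2, ← hw]; rfl
    rw [← h1]
    exact rootFin_eq_of_mk_eq hp h2

lemma adj_gdepth (hp : Treeish p) {v w : Fin n} (h : (graph p).Adj v w)
    (hle : gdepth hp w ≤ gdepth hp v) : p v = Fin.castSucc w := by
  rcases h.2 with h2 | h2
  · exact h2
  · exfalso
    have hne : p w ≠ Fin.last n := by rw [h2]; exact castSucc_ne_last v
    have := gdepth_parent hp hne
    rw [show (p w).castPred hne = v by simp [h2]] at this
    omega

lemma graph_isAcyclic (hp : Treeish p) : (graph p).IsAcyclic := by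
  intro v c hc
  obtain ⟨u, hu_mem, hu_max⟩ := Finset.exists_max_image c.support.toFinset (gdepth hp)
    ⟨v, by simp [SimpleGraph.Walk.start_mem_support]⟩
  simp only [List.mem_toFinset] at hu_mem
  set c' := c.rotate _ hu_mem with hc'def
  have hcyc : c'.IsCycle := hc.rotate hu_mem
  have hmax' : ∀ x ∈ c'.support, gdepth hp x ≤ gdepth hp u := by
    intro x hx
    rw [SimpleGraph.Walk.support_eq_cons, List.mem_cons] at hx
    rcases hx with rfl | hx
    · exact le_refl _
    · refine hu_max x (List.mem_toFinset.mpr ?_)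
      exact List.mem_of_mem_tail (((SimpleGraph.Walk.support_rotate c _ hu_mem).mem_iff).mp hx)
  have hlen : 3 ≤ c'.length := hcyc.three_le_length
  have hNil : ¬c'.Nil := by
    rw [SimpleGraph.Walk.not_nil_iff_lt_length]; omega
  set x := c'.getVert 1 with hx
  set q := c'.tail with hq
  have hdecomp : SimpleGraph.Walk.cons (c'.adj_snd hNil) q = c' :=
    c'.cons_tail_eq hNil
  have hcyc2 : q.IsPath ∧ s(u, x) ∉ q.edges := by
    rw [← SimpleGraph.Walk.cons_isCycle_iff]
    rw [hdecomp]
    exact hcyc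
    exact c'.adj_snd hNil
  have hqlen : q.length + 1 = c'.length := SimpleGraph.Walk.length_tail_add_one hNil
  have hqNil : ¬q.reverse.Nil := by
    rw [SimpleGraph.Walk.not_nil_iff_lt_length, SimpleGraph.Walk.length_reverse]; omega
  set y := q.reverse.getVert 1 with hy
  have hadj_uy : (graph p).Adj u y := q.reverse.adj_snd hqNil
  have hy_mem : y ∈ c'.support := by
    have : y ∈ q.reverse.support := by
      rw [SimpleGraph.Walk.mem_support_iff_exists_getVert]
      exact ⟨1, rfl, by rw [SimpleGraph.Walk.length_reverse]; omega⟩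
    rw [SimpleGraph.Walk.support_reverse, List.mem_reverse] at this
    rw [← hdecomp, SimpleGraph.Walk.support_cons]
    exact List.mem_cons_of_mem _ this
  have hx_mem : x ∈ c'.support := by
    rw [SimpleGraph.Walk.mem_support_iff_exists_getVert]
    exact ⟨1, rfl, by omega⟩
  have hadj_ux : (graph p).Adj u x := c'.adj_snd hNil
  have hpu_x : p u = Fin.castSucc x := adj_gdepth hp hadj_ux (hmax' x hx_mem)
  have hpu_y : p u = Fin.castSucc y := adj_gdepth hp hadj_uy (hmax' y hy_mem)
  have hxy : x = y := Fin.castSucc_injective n (hpu_x ▸ hpu_y)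
  -- s(u, y) is an edge of q
  have hedge : s(u, y) ∈ q.edges := by
    have h1 : s(u, y) ∈ q.reverse.edges := by
      have := q.reverse.cons_tail_eq hqNil
      rw [← this, SimpleGraph.Walk.edges_cons]
      exact List.mem_cons_self
    rwa [SimpleGraph.Walk.edges_reverse, List.mem_reverse] at h1
  rw [← hxy] at hedge
  exact hcyc2.2 hedge

section Inverse

open SimpleGraph.Walk

variable {G : SimpleGraph (Fin n)} {R : Finset (Fin n)}

/-- the root of the component of `v` -/
noncomputable def rootOf (hR : ∀ c, ∃! v, v ∈ R ∧ G.connectedComponentMk v = c)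
    (v : Fin n) : Fin n :=
  (hR (G.connectedComponentMk v)).choose

lemma rootOf_spec (hR : ∀ c, ∃! v, v ∈ R ∧ G.connectedComponentMk v = c) (v : Fin n) :
    rootOf hR v ∈ R ∧ G.connectedComponentMk (rootOf hR v) = G.connectedComponentMk v :=
  (hR (G.connectedComponentMk v)).choose_spec.1

lemma rootOf_unique (hR : ∀ c, ∃! v, v ∈ R ∧ G.connectedComponentMk v = c) {v x : Fin n}
    (h1 : x ∈ R) (h2 : G.connectedComponentMk x = G.connectedComponentMk v) :
    x = rootOf hR v :=
  (hR (G.connectedComponentMk v)).choose_spec.2 x ⟨h1, h2⟩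

lemma rootOf_congr (hR : ∀ c, ∃! v, v ∈ R ∧ G.connectedComponentMk v = c) {v w : Fin n}
    (h : G.connectedComponentMk v = G.connectedComponentMk w) :
    rootOf hR v = rootOf hR w :=
  congrArg (fun c => (hR c).choose) h

lemma reachable_rootOf (hR : ∀ c, ∃! v, v ∈ R ∧ G.connectedComponentMk v = c) (v : Fin n) :
    G.Reachable v (rootOf hR v) :=
  (SimpleGraph.ConnectedComponent.exact (rootOf_spec hR v).2).symm

/-- a choice of path from `v` to the root of its component -/
noncomputable def pathTo (hR : ∀ c, ∃! v, v ∈ R ∧ G.connectedComponentMk v = c)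
    (v : Fin n) : G.Walk v (rootOf hR v) :=
  ((reachable_rootOf hR v).some).toPath.1

lemma pathTo_isPath (hR : ∀ c, ∃! v, v ∈ R ∧ G.connectedComponentMk v = c) (v : Fin n) :
    (pathTo hR v).IsPath := ((reachable_rootOf hR v).some).toPath.2

noncomputable def plen (hR : ∀ c, ∃! v, v ∈ R ∧ G.connectedComponentMk v = c)
    (v : Fin n) : ℕ := (pathTo hR v).length

/-- path uniqueness from acyclicity, for walks -/
lemma walk_unique (hG : G.IsAcyclic) {a b : Fin n} (q₁ q₂ : G.Walk a b)
    (h1 : q₁.IsPath) (h2 : q₂.IsPath) : q₁ = q₂ := by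
  have := SimpleGraph.isAcyclic_iff_path_unique.mp hG (p := ⟨q₁, h1⟩) (q := ⟨q₂, h2⟩)
  exact congrArg Subtype.val this

lemma mem_R_iff_plen_eq_zero (hG : G.IsAcyclic)
    (hR : ∀ c, ∃! v, v ∈ R ∧ G.connectedComponentMk v = c) {v : Fin n} :
    v ∈ R ↔ plen hR v = 0 := by
  constructor
  · intro hv
    have hv' : v = rootOf hR v := rootOf_unique hR hv rfl
    have h1 : (pathTo hR v).copy rfl hv'.symm = SimpleGraph.Walk.nil :=
      walk_unique hG _ _ ((isPath_copy _ rfl hv'.symm).mpr (pathTo_isPath hR v))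
        (by simp)
    have := congrArg SimpleGraph.Walk.length h1
    simpa [plen] using this
  · intro h
    have : v = rootOf hR v := eq_of_length_eq_zero h
    rw [this]
    exact (rootOf_spec hR v).1

lemma mk_eq_of_adj {v w : Fin n} (hadj : G.Adj v w) :
    G.connectedComponentMk v = G.connectedComponentMk w :=
  SimpleGraph.ConnectedComponent.sound hadj.reachable

lemma key_lt (hG : G.IsAcyclic) (hR : ∀ c, ∃! v, v ∈ R ∧ G.connectedComponentMk v = c)
    {v w : Fin n} (hadj : G.Adj v w) (hlt : plen hR w < plen hR v) :
    (pathTo hR v).getVert 1 = w := by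
  have hroot : rootOf hR w = rootOf hR v := rootOf_congr hR (mk_eq_of_adj hadj).symm
  set q := (pathTo hR w).copy rfl hroot with hq
  have hqpath : q.IsPath := (isPath_copy _ rfl hroot).mpr (pathTo_isPath hR w)
  have hqlen : q.length = plen hR w := length_copy _ rfl hroot
  have hvq : v ∉ q.support := by
    intro hmem
    have hdpath := hqpath.dropUntil hmem
    have := walk_unique hG _ _ hdpath (pathTo_isPath hR v)
    have hlen := congrArg SimpleGraph.Walk.length this
    have hle := length_dropUntil_le q hmem
    rw [hqlen] at hle
    simp only [plen] at hlt hlen hle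
    omega
  have hcons : (SimpleGraph.Walk.cons hadj q).IsPath :=
    (cons_isPath_iff hadj q).mpr ⟨hqpath, hvq⟩
  have := walk_unique hG _ _ (pathTo_isPath hR v) hcons
  rw [this, getVert_cons _ _ (by norm_num), getVert_zero]

lemma adj_plen_ne (hG : G.IsAcyclic) (hR : ∀ c, ∃! v, v ∈ R ∧ G.connectedComponentMk v = c)
    {v w : Fin n} (hadj : G.Adj v w) : plen hR v ≠ plen hR w := by
  intro heq
  have hroot : rootOf hR w = rootOf hR v := rootOf_congr hR (mk_eq_of_adj hadj).symm
  set q := (pathTo hR w).copy rfl hroot with hq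
  have hqpath : q.IsPath := (isPath_copy _ rfl hroot).mpr (pathTo_isPath hR w)
  have hqlen : q.length = plen hR w := length_copy _ rfl hroot
  by_cases hvq : v ∈ q.support
  · have hdpath := hqpath.dropUntil hvq
    have heq2 := walk_unique hG _ _ hdpath (pathTo_isPath hR v)
    have hlen := congrArg SimpleGraph.Walk.length heq2
    have hspec := congrArg SimpleGraph.Walk.length (take_spec q hvq)
    rw [length_append] at hspec
    have htake0 : (q.takeUntil v hvq).length = 0 := by
      simp only [plen] at heq hlen hqlen
      omega
    exact hadj.ne' (eq_of_length_eq_zero htake0)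
  · have hcons : (SimpleGraph.Walk.cons hadj q).IsPath :=
      (cons_isPath_iff hadj q).mpr ⟨hqpath, hvq⟩
    have := walk_unique hG _ _ (pathTo_isPath hR v) hcons
    have hlen := congrArg SimpleGraph.Walk.length this
    simp only [SimpleGraph.Walk.length_cons] at hlen
    simp only [plen] at heq hqlen
    omega

noncomputable def parentOf (hR : ∀ c, ∃! v, v ∈ R ∧ G.connectedComponentMk v = c) :
    Fin n → Fin (n+1) := fun v =>
  if v ∈ R then Fin.last n else Fin.castSucc ((pathTo hR v).getVert 1)

lemma parentOf_mem (hR : ∀ c, ∃! v, v ∈ R ∧ G.connectedComponentMk v = c) {v : Fin n}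
    (hv : v ∈ R) : parentOf hR v = Fin.last n := if_pos hv

lemma parentOf_not_mem (hR : ∀ c, ∃! v, v ∈ R ∧ G.connectedComponentMk v = c) {v : Fin n}
    (hv : v ∉ R) : parentOf hR v = Fin.castSucc ((pathTo hR v).getVert 1) := if_neg hv

lemma pathTo_not_nil (hR : ∀ c, ∃! v, v ∈ R ∧ G.connectedComponentMk v = c) {v : Fin n}
    (hv : v ∉ R) : ¬(pathTo hR v).Nil := by
  apply not_nil_of_ne
  intro heq
  exact hv (heq ▸ (rootOf_spec hR v).1)

lemma snd_adj (hR : ∀ c, ∃! v, v ∈ R ∧ G.connectedComponentMk v = c) {v : Fin n}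
    (hv : v ∉ R) : G.Adj v ((pathTo hR v).getVert 1) :=
  (pathTo hR v).adj_snd (pathTo_not_nil hR hv)

lemma snd_plen_lt (hG : G.IsAcyclic) (hR : ∀ c, ∃! v, v ∈ R ∧ G.connectedComponentMk v = c)
    {v : Fin n} (hv : v ∉ R) :
    plen hR ((pathTo hR v).getVert 1) < plen hR v := by
  set q := pathTo hR v with hqdef
  have hNil : ¬q.Nil := pathTo_not_nil hR hv
  set w := q.getVert 1 with hw
  have hroot : rootOf hR w = rootOf hR v :=
    rootOf_congr hR (mk_eq_of_adj (snd_adj hR hv)).symm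
  have htailpath : q.tail.IsPath := (pathTo_isPath hR v).tail
  have hcopy : (q.tail.copy rfl hroot.symm).IsPath :=
    (isPath_copy _ rfl hroot.symm).mpr htailpath
  have := walk_unique hG _ _ (pathTo_isPath hR w) hcopy
  have hlen := congrArg SimpleGraph.Walk.length this
  rw [length_copy] at hlen
  have htl : q.tail.length + 1 = q.length := length_tail_add_one hNil
  simp only [plen]
  rw [← hqdef]
  omega

lemma treeish_parentOf (hG : G.IsAcyclic)
    (hR : ∀ c, ∃! v, v ∈ R ∧ G.connectedComponentMk v = c) :
    Treeish (parentOf hR) := by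
  intro x
  induction x using Fin.lastCases with
  | last => exact ⟨0, rfl⟩
  | cast v =>
    suffices H : ∀ k (v : Fin n), plen hR v = k →
        ∃ m, (step (parentOf hR))^[m] (Fin.castSucc v) = Fin.last n from
      H (plen hR v) v rfl
    intro k
    induction k using Nat.strong_induction_on with
    | _ k ih =>
    intro v hk
    by_cases hv : v ∈ R
    · exact ⟨1, by simp [step_castSucc, parentOf_mem hR hv]⟩
    · set w := (pathTo hR v).getVert 1 with hw
      have hlt : plen hR w < k := hk ▸ snd_plen_lt hG hR hv
      obtain ⟨m, hm⟩ := ih _ hlt w rfl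
      refine ⟨m + 1, ?_⟩
      rw [Function.iterate_succ_apply, step_castSucc, parentOf_not_mem hR hv]
      exact hm

end Inverse

section RoundTrip

open SimpleGraph.Walk

variable {p : Fin n → Fin (n+1)}

lemma parentOf_graph (hp : Treeish p) :
    parentOf (root_prop hp) = p := by
  funext v
  set hR := root_prop hp with hRdef
  by_cases hv : p v = Fin.last n
  · rw [parentOf_mem hR (mem_roots.mpr hv), hv]
  · have hvR : v ∉ roots p := by simp [hv]
    rw [parentOf_not_mem hR hvR]
    obtain ⟨c, hcpath, _, hc1⟩ := exists_chain hp v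
    have hroot : rootOf hR v = rootFin hp v := by
      refine (rootOf_unique hR (rootFin_mem_roots hp v) ?_).symm
      exact SimpleGraph.ConnectedComponent.sound (reachable_rootFin hp v).symm
    have hc' : (c.copy rfl hroot.symm).IsPath := (isPath_copy _ rfl hroot.symm).mpr hcpath
    have := walk_unique (graph_isAcyclic hp) _ _ (pathTo_isPath hR v) hc'
    rw [this, getVert_copy, hc1 hv, Fin.castSucc_castPred]

lemma roots_parentOf {G : SimpleGraph (Fin n)} {R : Finset (Fin n)}
    (hR : ∀ c, ∃! v, v ∈ R ∧ G.connectedComponentMk v = c) :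
    roots (parentOf hR) = R := by
  ext v
  rw [mem_roots]
  constructor
  · intro h
    by_contra hv
    rw [parentOf_not_mem hR hv] at h
    exact castSucc_ne_last _ h
  · intro h
    exact parentOf_mem hR h

lemma graph_parentOf {G : SimpleGraph (Fin n)} {R : Finset (Fin n)}
    (hG : G.IsAcyclic) (hR : ∀ c, ∃! v, v ∈ R ∧ G.connectedComponentMk v = c) :
    graph (parentOf hR) = G := by
  ext v w
  rw [graph_adj]
  constructor
  · rintro ⟨hne, h | h⟩
    · have hvR : v ∉ R := by
        intro hv
        rw [parentOf_mem hR hv] at h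
        exact castSucc_ne_last w h.symm
      rw [parentOf_not_mem hR hvR] at h
      have := snd_adj hR hvR
      rwa [Fin.castSucc_injective n h] at this
    · have hwR : w ∉ R := by
        intro hw
        rw [parentOf_mem hR hw] at h
        exact castSucc_ne_last v h.symm
      rw [parentOf_not_mem hR hwR] at h
      have := snd_adj hR hwR
      rw [Fin.castSucc_injective n h] at this
      exact this.symm
  · intro hadj
    refine ⟨hadj.ne, ?_⟩
    rcases lt_trichotomy (plen hR v) (plen hR w) with h | h | h
    · right
      have hkey := key_lt hG hR hadj.symm h
      have hwR : w ∉ R := by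
        rw [mem_R_iff_plen_eq_zero hG hR]
        omega
      rw [parentOf_not_mem hR hwR, hkey]
    · exact absurd h (adj_plen_ne hG hR hadj)
    · left
      have hkey := key_lt hG hR hadj h
      have hvR : v ∉ R := by
        rw [mem_R_iff_plen_eq_zero hG hR]
        omega
      rw [parentOf_not_mem hR hvR, hkey]

end RoundTrip

/-- Step A: rooted forests as graphs are equinumerous with treeish parent functions. -/
noncomputable def equivA (n : ℕ) :
    {p : Fin n → Fin (n+1) // Treeish p} ≃
    {F : SimpleGraph (Fin n) × Finset (Fin n) //
      F.1.IsAcyclic ∧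
      (∀ c : F.1.ConnectedComponent, ∃! v, v ∈ F.2 ∧ F.1.connectedComponentMk v = c)} where
  toFun := fun x => ⟨(graph x.1, roots x.1), graph_isAcyclic x.2, root_prop x.2⟩
  invFun := fun F => ⟨parentOf F.2.2, treeish_parentOf F.2.1 F.2.2⟩
  left_inv := by
    rintro ⟨p, hp⟩
    simp only [Subtype.mk.injEq]
    exact parentOf_graph hp
  right_inv := by
    rintro ⟨⟨G, R⟩, hG, hR⟩
    simp only [Subtype.mk.injEq, Prod.mk.injEq]
    exact ⟨graph_parentOf hG hR, roots_parentOf hR⟩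

section Joyal

open scoped Classical

/-- no cycles under a treeish map -/
lemma treeish_no_cycle {p : Fin n → Fin (n+1)} (hp : Treeish p) {x : Fin (n+1)} {k : ℕ}
    (hk : 0 < k) (hx : (step p)^[k] x = x) : x = Fin.last n := by
  obtain ⟨m, hm⟩ := hp x
  have hper : ∀ j, (step p)^[j * k] x = x := by
    intro j
    induction j with
    | zero => simp
    | succ j ih =>
      rw [Nat.succ_mul, Function.iterate_add_apply, hx, ih]
  have h1 : (step p)^[m * k] x = x := hper m
  have h2 : (step p)^[m * k] x = Fin.last n := by
    have hmk : m ≤ m * k := Nat.le_mul_of_pos_right m hk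
    have hsplit : m * k = (m * k - m) + m := by omega
    rw [hsplit, Function.iterate_add_apply, hm, Function.iterate_fixed (step_last p)]
  rw [← h1, h2]

variable (f : Fin n → Fin (n+1))

/-- `v` lies on a cycle of `f` -/
def Cyc (v : Fin n) : Prop := ∃ k, 0 < k ∧ (step f)^[k] v.castSucc = v.castSucc

lemma Cyc.ne_last {f : Fin n → Fin (n+1)} {v : Fin n} (h : Cyc f v) : f v ≠ Fin.last n := by
  obtain ⟨k, hk, hcyc⟩ := h
  intro hlast
  have : (step f)^[k] v.castSucc = Fin.last n := by
    have hk1 : k = (k - 1) + 1 := by omega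
    rw [hk1, Function.iterate_succ_apply, step_castSucc, hlast,
      Function.iterate_fixed (step_last f)]
  rw [hcyc] at this
  exact castSucc_ne_last v this

lemma Cyc.next {f : Fin n → Fin (n+1)} {v : Fin n} (h : Cyc f v) :
    Cyc f ((f v).castPred h.ne_last) := by
  obtain ⟨k, hk, hcyc⟩ := h
  refine ⟨k, hk, ?_⟩
  rw [Fin.castSucc_castPred]
  have : f v = step f v.castSucc := (step_castSucc f v).symm
  rw [this, ← Function.iterate_succ_apply, Function.iterate_succ_apply', hcyc,
    step_castSucc]

lemma Cyc.inj {f : Fin n → Fin (n+1)} {v w : Fin n} (hv : Cyc f v) (hw : Cyc f w)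
    (h : f v = f w) : v = w := by
  obtain ⟨a, ha, hva⟩ := hv
  obtain ⟨c, hc, hwc⟩ := hw
  have hper : ∀ (x : Fin (n+1)) (k j : ℕ), (step f)^[k] x = x → (step f)^[j * k] x = x := by
    intro x k j hx
    induction j with
    | zero => simp
    | succ j ih => rw [Nat.succ_mul, Function.iterate_add_apply, hx, ih]
  have h1 : (step f)^[c * a] v.castSucc = v.castSucc := hper v.castSucc a c hva
  have h2 : (step f)^[c * a] w.castSucc = w.castSucc := by
    have := hper w.castSucc c a hwc; rwa [Nat.mul_comm a c] at this
  have hca : 0 < c * a := Nat.mul_pos hc ha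
  have key : ∀ x y : Fin (n+1), step f x = step f y →
      (step f)^[c * a] x = x → (step f)^[c * a] y = y → x = y := by
    intro x y hstep hx hy
    have : (step f)^[c * a] x = (step f)^[c * a] y := by
      have hrw : c * a = (c * a - 1) + 1 := by omega
      rw [hrw, Function.iterate_succ_apply, Function.iterate_succ_apply, hstep]
    rw [hx, hy] at this
    exact this
  have := key v.castSucc w.castSucc (by rw [step_castSucc, step_castSucc, h]) h1 h2
  exact Fin.castSucc_injective n this

/-- the finset of cyclic vertices -/
noncomputable def cycSet : Finset (Fin n) := Finset.univ.filter (Cyc f)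

lemma mem_cycSet {v : Fin n} : v ∈ cycSet f ↔ Cyc f v := by simp [cycSet]

/-- the restriction of `f` to its cyclic set, as a bijection -/
noncomputable def cycMap : {v // v ∈ cycSet f} → {v // v ∈ cycSet f} :=
  fun v => ⟨(f v.1).castPred ((mem_cycSet f).mp v.2).ne_last,
    (mem_cycSet f).mpr ((mem_cycSet f).mp v.2).next⟩

lemma cycMap_injective : Function.Injective (cycMap f) := by
  rintro ⟨v, hv⟩ ⟨w, hw⟩ h
  simp only [cycMap, Subtype.mk.injEq] at h
  have h' : f v = f w := by
    have := congrArg Fin.castSucc h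
    rwa [Fin.castSucc_castPred, Fin.castSucc_castPred] at this
  exact Subtype.ext (Cyc.inj ((mem_cycSet f).mp hv) ((mem_cycSet f).mp hw) h')

noncomputable def cycEquiv : {v // v ∈ cycSet f} ≃ {v // v ∈ cycSet f} :=
  Equiv.ofBijective _ ((Finite.injective_iff_bijective).mp (cycMap_injective f))

/-- sorted enumeration of the cyclic set -/
noncomputable def cycEnum : Fin (cycSet f).card ≃o {v // v ∈ cycSet f} :=
  (cycSet f).orderIsoOfFin rfl

/-- the Joyal word: `uF f i` is the image under `f` of the `i`-th smallest cyclic vertex -/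
noncomputable def uF (i : Fin (cycSet f).card) : Fin n :=
  (cycEquiv f (cycEnum f i)).1

lemma uF_injective : Function.Injective (uF f) := by
  intro i j h
  exact (cycEnum f).injective ((cycEquiv f).injective (Subtype.ext h))

lemma uF_mem (i : Fin (cycSet f).card) : uF f i ∈ cycSet f := (cycEquiv f (cycEnum f i)).2

lemma uF_surj {v : Fin n} (hv : v ∈ cycSet f) : ∃ i, uF f i = v := by
  obtain ⟨c, hc⟩ := (cycEquiv f).surjective ⟨v, hv⟩
  obtain ⟨i, hi⟩ := (cycEnum f).surjective c
  exact ⟨i, by rw [uF, hi, hc]⟩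

lemma castSucc_uF (i : Fin (cycSet f).card) :
    Fin.castSucc (uF f i) = f (cycEnum f i) := by
  simp only [uF, cycEquiv, Equiv.ofBijective_apply, cycMap, Fin.castSucc_castPred]

end Joyal

section Phi

open scoped Classical

variable (f : Fin n → Fin (n+1))

noncomputable def phiP : Fin n → Fin (n+1) := fun v =>
  if h : v ∈ cycSet f then
    (if ((cycEnum f).symm ((cycEquiv f).symm ⟨v, h⟩) : ℕ) = 0 then Fin.last n
     else Fin.castSucc (uF f ⟨((cycEnum f).symm ((cycEquiv f).symm ⟨v, h⟩) : ℕ) - 1,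
       Nat.lt_of_le_of_lt (Nat.sub_le _ _) (Fin.isLt _)⟩))
  else f v

noncomputable def phiB : Fin (n+1) :=
  if h : 0 < (cycSet f).card then
    Fin.castSucc (uF f ⟨(cycSet f).card - 1, by omega⟩)
  else Fin.last n

lemma phiP_not_mem {v : Fin n} (h : v ∉ cycSet f) : phiP f v = f v := dif_neg h

lemma phiP_uF (i : Fin (cycSet f).card) :
    phiP f (uF f i) = if (i : ℕ) = 0 then Fin.last n
      else Fin.castSucc (uF f ⟨(i : ℕ) - 1,
        Nat.lt_of_le_of_lt (Nat.sub_le _ _) (Fin.isLt _)⟩) := by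
  have hmem : uF f i ∈ cycSet f := uF_mem f i
  have hsub : (⟨uF f i, hmem⟩ : {v // v ∈ cycSet f}) = cycEquiv f (cycEnum f i) :=
    Subtype.ext rfl
  have hidx : (cycEnum f).symm ((cycEquiv f).symm ⟨uF f i, hmem⟩) = i := by
    rw [hsub, Equiv.symm_apply_apply]
    exact (cycEnum f).symm_apply_apply i
  rw [phiP]
  rw [dif_pos hmem]
  simp only [hidx]

lemma phiP_chain (i : Fin (cycSet f).card) :
    ∀ m, m ≤ (i : ℕ) → (step (phiP f))^[m] (Fin.castSucc (uF f i)) =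
      Fin.castSucc (uF f ⟨(i : ℕ) - m, Nat.lt_of_le_of_lt (Nat.sub_le _ _) (Fin.isLt _)⟩) := by
  intro m
  induction m generalizing i with
  | zero =>
    intro _
    rfl
  | succ m ih =>
    intro hm
    have hi0 : (i : ℕ) ≠ 0 := by omega
    rw [Function.iterate_succ_apply, step_castSucc, phiP_uF, if_neg hi0]
    set j : Fin (cycSet f).card := ⟨(i : ℕ) - 1,
      Nat.lt_of_le_of_lt (Nat.sub_le _ _) (Fin.isLt _)⟩ with hj
    have := ih j (by rw [hj]; simp; omega)
    rw [this]
    refine congrArg Fin.castSucc (congrArg (uF f) (Fin.ext ?_))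
    simp [hj]
    omega

lemma phiP_chain_last (i : Fin (cycSet f).card) :
    (step (phiP f))^[(i : ℕ) + 1] (Fin.castSucc (uF f i)) = Fin.last n := by
  rw [Function.iterate_succ_apply', phiP_chain f i (i : ℕ) le_rfl, step_castSucc, phiP_uF]
  simp

lemma exists_hits (x : Fin (n+1)) :
    ∃ k, (step f)^[k] x = Fin.last n ∨
      ∃ v ∈ cycSet f, (step f)^[k] x = Fin.castSucc v := by
  obtain ⟨a, b, hab, heq⟩ := Finite.exists_ne_map_eq_of_infinite (fun k : ℕ => (step f)^[k] x)
  wlog hlt : a < b generalizing a b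
  · exact this b a hab.symm heq.symm (by omega)
  refine ⟨a, ?_⟩
  set y := (step f)^[a] x with hy
  by_cases hylast : y = Fin.last n
  · exact Or.inl hylast
  · right
    refine ⟨y.castPred hylast, ?_, (Fin.castSucc_castPred y hylast).symm⟩
    rw [mem_cycSet]
    refine ⟨b - a, by omega, ?_⟩
    rw [Fin.castSucc_castPred]
    calc (step f)^[b-a] y = (step f)^[(b-a) + a] x := by
          rw [Function.iterate_add_apply]
      _ = (step f)^[b] x := by congr 1; omega
      _ = y := heq.symm

lemma phiP_agree (x : Fin (n+1)) {k : ℕ}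
    (hk : ∀ j < k, ¬((step f)^[j] x = Fin.last n ∨
      ∃ v ∈ cycSet f, (step f)^[j] x = Fin.castSucc v)) :
    ∀ j ≤ k, (step (phiP f))^[j] x = (step f)^[j] x := by
  intro j hj
  induction j with
  | zero => rfl
  | succ j ihj =>
    have hjk : j < k := by omega
    rw [Function.iterate_succ_apply', Function.iterate_succ_apply', ihj (by omega)]
    set y := (step f)^[j] x with hy
    have hspec := hk j hjk
    push_neg at hspec
    obtain ⟨hy1, hy2⟩ := hspec
    set w := y.castPred hy1 with hw
    have hwmem : w ∉ cycSet f := by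
      intro hmem
      exact (hy2 w hmem) (Fin.castSucc_castPred y hy1).symm
    calc step (phiP f) y = step (phiP f) (Fin.castSucc w) := by rw [hw, Fin.castSucc_castPred]
      _ = phiP f w := step_castSucc _ w
      _ = f w := phiP_not_mem f hwmem
      _ = step f (Fin.castSucc w) := (step_castSucc f w).symm
      _ = step f y := by rw [hw, Fin.castSucc_castPred]

lemma treeish_phiP : Treeish (phiP f) := by
  intro x
  have hk₀ := Nat.find_spec (exists_hits f x)
  set k₀ := Nat.find (exists_hits f x) with hk₀def
  have hmin : ∀ j < k₀, ¬((step f)^[j] x = Fin.last n ∨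
      ∃ v ∈ cycSet f, (step f)^[j] x = Fin.castSucc v) :=
    fun j hj => Nat.find_min (exists_hits f x) hj
  have hagree := phiP_agree f x hmin
  rcases hk₀ with hlast | ⟨v, hv, hcast⟩
  · exact ⟨k₀, by rw [hagree k₀ le_rfl, hlast]⟩
  · obtain ⟨i, hi⟩ := uF_surj f hv
    refine ⟨((i : ℕ) + 1) + k₀, ?_⟩
    rw [Function.iterate_add_apply, hagree k₀ le_rfl, hcast, ← hi]
    exact phiP_chain_last f i

end Phi

section Spine

open scoped Classical

variable {p : Fin n → Fin (n+1)}

lemma depth_iterate (hp : Treeish p) (x : Fin (n+1)) :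
    ∀ k, k ≤ depth hp x → depth hp ((step p)^[k] x) = depth hp x - k := by
  intro k
  induction k with
  | zero => simp
  | succ k ih =>
    intro hk
    have hk' : k ≤ depth hp x := by omega
    have hd := ih hk'
    have hne : (step p)^[k] x ≠ Fin.last n := by
      intro hlast
      have : depth hp ((step p)^[k] x) = 0 := by rw [hlast]; exact depth_last hp
      omega
    rw [Function.iterate_succ_apply']
    have := depth_step hp hne
    omega

lemma depth_zero_eq_last (hp : Treeish p) {x : Fin (n+1)} (h : depth hp x = 0) :
    x = Fin.last n := by
  have := iterate_depth hp x
  rwa [h] at this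

lemma le_depth (hp : Treeish p) {x : Fin (n+1)} {k : ℕ}
    (h : ∀ j < k, (step p)^[j] x ≠ Fin.last n) : k ≤ depth hp x := by
  by_contra hlt
  push_neg at hlt
  exact h _ hlt (iterate_depth hp x)

noncomputable def spineN (hp : Treeish p) (b : Fin (n+1)) (j : ℕ) : Fin (n+1) :=
  (step p)^[depth hp b - 1 - j] b

lemma spineN_ne_last (hp : Treeish p) (b : Fin (n+1)) {j : ℕ} (hj : j < depth hp b) :
    spineN hp b j ≠ Fin.last n :=
  iterate_ne_last hp (by omega)

noncomputable def spineF (hp : Treeish p) (b : Fin (n+1)) (j : ℕ) (hj : j < depth hp b) :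
    Fin n := (spineN hp b j).castPred (spineN_ne_last hp b hj)

lemma depth_spineF (hp : Treeish p) (b : Fin (n+1)) {j : ℕ} (hj : j < depth hp b) :
    depth hp (Fin.castSucc (spineF hp b j hj)) = j + 1 := by
  rw [spineF, Fin.castSucc_castPred, spineN, depth_iterate hp b _ (by omega)]
  omega

lemma spineF_inj (hp : Treeish p) (b : Fin (n+1)) {j₁ j₂ : ℕ}
    (h₁ : j₁ < depth hp b) (h₂ : j₂ < depth hp b)
    (h : spineF hp b j₁ h₁ = spineF hp b j₂ h₂) : j₁ = j₂ := by
  have := depth_spineF hp b h₁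
  rw [h, depth_spineF hp b h₂] at this
  omega

lemma p_spineF_zero (hp : Treeish p) (b : Fin (n+1)) (h : 0 < depth hp b) :
    p (spineF hp b 0 h) = Fin.last n := by
  have h1 : step p (spineN hp b 0) = (step p)^[(depth hp b - 1 - 0) + 1] b :=
    (Function.iterate_succ_apply' (step p) (depth hp b - 1 - 0) b).symm
  have h2 : step p (spineN hp b 0) = Fin.last n := by
    rw [h1, show depth hp b - 1 - 0 + 1 = depth hp b from by omega]
    exact iterate_depth hp b
  rw [← step_castSucc p (spineF hp b 0 h), spineF, Fin.castSucc_castPred]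
  exact h2

lemma p_spineF_succ (hp : Treeish p) (b : Fin (n+1)) {j : ℕ} (hj : j + 1 < depth hp b) :
    p (spineF hp b (j+1) hj) = Fin.castSucc (spineF hp b j (by omega)) := by
  have h0 : step p (spineN hp b (j+1)) = (step p)^[(depth hp b - 1 - (j+1)) + 1] b :=
    (Function.iterate_succ_apply' (step p) (depth hp b - 1 - (j+1)) b).symm
  have h1 : spineN hp b j = step p (spineN hp b (j+1)) := by
    rw [h0, spineN]
    congr 1
    omega
  rw [← step_castSucc p (spineF hp b (j+1) hj), spineF, Fin.castSucc_castPred, ← h1]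
  exact (Fin.castSucc_castPred _ _).symm

lemma spineF_last (hp : Treeish p) (b : Fin (n+1)) (h : 0 < depth hp b) :
    Fin.castSucc (spineF hp b (depth hp b - 1) (by omega)) = b := by
  rw [spineF, Fin.castSucc_castPred, spineN]
  have : depth hp b - 1 - (depth hp b - 1) = 0 := by omega
  rw [this]
  rfl

noncomputable def spineSet (hp : Treeish p) (b : Fin (n+1)) : Finset (Fin n) :=
  Finset.univ.filter (fun v => ∃ j, ∃ hj : j < depth hp b, spineF hp b j hj = v)

lemma mem_spineSet {hp : Treeish p} {b : Fin (n+1)} {v : Fin n} :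
    v ∈ spineSet hp b ↔ ∃ j, ∃ hj : j < depth hp b, spineF hp b j hj = v := by
  simp [spineSet]

lemma spineSet_card (hp : Treeish p) (b : Fin (n+1)) :
    (spineSet hp b).card = depth hp b := by
  have himg : spineSet hp b =
      Finset.image (fun i : Fin (depth hp b) => spineF hp b i.1 i.2) Finset.univ := by
    ext v
    rw [mem_spineSet, Finset.mem_image]
    constructor
    · rintro ⟨j, hj, hv⟩; exact ⟨⟨j, hj⟩, Finset.mem_univ _, hv⟩
    · rintro ⟨⟨j, hj⟩, _, hv⟩; exact ⟨j, hj, hv⟩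
  rw [himg, Finset.card_image_of_injective _ (fun i₁ i₂ h => Fin.ext (spineF_inj hp b i₁.2 i₂.2 h)),
    Finset.card_univ, Fintype.card_fin]

/-- the inverse (Joyal) map -/
noncomputable def psiF (hp : Treeish p) (b : Fin (n+1)) : Fin n → Fin (n+1) := fun v =>
  if h : v ∈ spineSet hp b then
    Fin.castSucc (spineF hp b
      (((spineSet hp b).orderIsoOfFin rfl).symm ⟨v, h⟩ : ℕ)
      (by have h1 := Fin.isLt (((spineSet hp b).orderIsoOfFin rfl).symm ⟨v, h⟩)
          have h2 := spineSet_card hp b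
          omega))
  else p v

end Spine

section CYC

lemma iterate_period {α : Type*} {F : α → α} {x : α} {k : ℕ} (h : F^[k] x = x) :
    ∀ j, F^[j * k] x = x := by
  intro j
  induction j with
  | zero => simp
  | succ j ih => rw [Nat.succ_mul, Function.iterate_add_apply, h, ih]

lemma cyc_iff_mem {p : Fin n → Fin (n+1)} (hp : Treeish p) (S : Finset (Fin n))
    (f : Fin n → Fin (n+1))
    (hoff : ∀ v ∉ S, f v = p v)
    (hinto : ∀ v ∈ S, ∃ w ∈ S, f v = Fin.castSucc w)
    (hinj : ∀ v ∈ S, ∀ w ∈ S, f v = f w → v = w) :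
    ∀ v, Cyc f v ↔ v ∈ S := by
  have claim1 : ∀ v ∈ S, ∀ k, ∃ w ∈ S, (step f)^[k] (Fin.castSucc v) = Fin.castSucc w := by
    intro v hv k
    induction k generalizing v with
    | zero => exact ⟨v, hv, rfl⟩
    | succ k ih =>
      obtain ⟨w, hw, hfw⟩ := hinto v hv
      obtain ⟨w', hw', hit⟩ := ih w hw
      exact ⟨w', hw', by rw [Function.iterate_succ_apply, step_castSucc, hfw, hit]⟩
  have cancel : ∀ k, ∀ a ∈ S, ∀ b ∈ S,
      (step f)^[k] (Fin.castSucc a) = (step f)^[k] (Fin.castSucc b) → a = b := by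
    intro k
    induction k with
    | zero =>
      intro a _ b _ h
      exact Fin.castSucc_injective n h
    | succ k ih =>
      intro a ha b hb h
      obtain ⟨a', ha', hfa⟩ := hinto a ha
      obtain ⟨b', hb', hfb⟩ := hinto b hb
      rw [Function.iterate_succ_apply, Function.iterate_succ_apply,
        step_castSucc, step_castSucc, hfa, hfb] at h
      have := ih a' ha' b' hb' h
      subst this
      exact hinj a ha b hb (hfa.trans hfb.symm)
  intro v
  constructor
  · rintro ⟨k, hk, hcyc⟩
    by_contra hv
    -- no iterate is last and none is in the image of S
    have hnoS : ∀ j w, w ∈ S → (step f)^[j] (Fin.castSucc v) ≠ Fin.castSucc w := by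
      intro j w hw hit
      -- invariance: all later iterates stay in S-image; at a multiple of k we return to v
      have hlater : ∀ m, ∃ w' ∈ S,
          (step f)^[j + m] (Fin.castSucc v) = Fin.castSucc w' := by
        intro m
        obtain ⟨w', hw', hit'⟩ := claim1 w hw m
        refine ⟨w', hw', ?_⟩
        rw [Nat.add_comm j m, Function.iterate_add_apply, hit, hit']
      obtain ⟨w', hw', hit'⟩ := hlater ((j + 1) * k - j)
      have hj : j + ((j+1) * k - j) = (j+1) * k := by
        have : j ≤ (j+1) * k := by nlinarith
        omega
      rw [hj, iterate_period hcyc (j+1)] at hit'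
      rw [Fin.castSucc_inj] at hit'
      rw [hit'] at hv
      exact hv hw'
    have hnolast : ∀ j, (step f)^[j] (Fin.castSucc v) ≠ Fin.last n := by
      intro j hit
      have h2 : (step f)^[(j+1) * k] (Fin.castSucc v) = Fin.last n := by
        have hj : (j+1) * k = ((j+1) * k - j) + j := by
          have : j ≤ (j+1) * k := by nlinarith
          omega
        rw [hj, Function.iterate_add_apply, hit,
          Function.iterate_fixed (step_last f)]
      rw [iterate_period hcyc (j+1)] at h2
      exact castSucc_ne_last v h2
    have hagree : ∀ j, (step f)^[j] (Fin.castSucc v) = (step p)^[j] (Fin.castSucc v) := by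
      intro j
      induction j with
      | zero => rfl
      | succ j ih =>
        rw [Function.iterate_succ_apply', Function.iterate_succ_apply', ← ih]
        set y := (step f)^[j] (Fin.castSucc v) with hy
        have hylast : y ≠ Fin.last n := hnolast j
        set w := y.castPred hylast with hw
        have hwS : w ∉ S := fun hmem => hnoS j w hmem (Fin.castSucc_castPred y hylast).symm
        calc step f y = step f (Fin.castSucc w) := by rw [hw, Fin.castSucc_castPred]
          _ = f w := step_castSucc f w
          _ = p w := hoff w hwS
          _ = step p (Fin.castSucc w) := (step_castSucc p w).symm
          _ = step p y := by rw [hw, Fin.castSucc_castPred]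
    have : (step p)^[k] (Fin.castSucc v) = Fin.castSucc v := by
      rw [← hagree]; exact hcyc
    exact castSucc_ne_last v (treeish_no_cycle hp hk this)
  · intro hv
    obtain ⟨a, b, hab, heq⟩ :=
      Finite.exists_ne_map_eq_of_infinite (fun k : ℕ => (step f)^[k] (Fin.castSucc v))
    wlog hlt : a < b generalizing a b
    · exact this b a hab.symm heq.symm (by omega)
    obtain ⟨w, hw, hit⟩ := claim1 v hv (b - a)
    have hcanc : v = w := by
      apply cancel a v hv w hw
      rw [← hit, ← Function.iterate_add_apply]
      have : a + (b - a) = b := by omega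
      rw [this]
      exact heq
    refine ⟨b - a, by omega, ?_⟩
    rw [hit, ← hcanc]
end CYC

section RoundTrips

open scoped Classical

lemma orderIso_symm_coe_congr {s₁ s₂ : Finset (Fin n)} (h : s₁ = s₂) {v : Fin n}
    (h1 : v ∈ s₁) (h2 : v ∈ s₂) :
    ((s₁.orderIsoOfFin rfl).symm ⟨v, h1⟩ : ℕ) = ((s₂.orderIsoOfFin rfl).symm ⟨v, h2⟩ : ℕ) := by
  subst h; rfl

variable {p : Fin n → Fin (n+1)}

lemma spineF_congr (hp : Treeish p) (b : Fin (n+1)) {j₁ j₂ : ℕ} (e : j₁ = j₂)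
    (h₁ : j₁ < depth hp b) (h₂ : j₂ < depth hp b) :
    spineF hp b j₁ h₁ = spineF hp b j₂ h₂ := by subst e; rfl

lemma psiF_mem (hp : Treeish p) (b : Fin (n+1)) {v : Fin n} (h : v ∈ spineSet hp b) :
    ∃ (hr : (((spineSet hp b).orderIsoOfFin rfl).symm ⟨v, h⟩ : ℕ) < depth hp b),
      psiF hp b v = Fin.castSucc
        (spineF hp b (((spineSet hp b).orderIsoOfFin rfl).symm ⟨v, h⟩ : ℕ) hr) := by
  refine ⟨?_, ?_⟩
  · have h1 := Fin.isLt (((spineSet hp b).orderIsoOfFin rfl).symm ⟨v, h⟩)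
    have h2 := spineSet_card hp b
    omega
  · rw [psiF, dif_pos h]

lemma psiF_not_mem (hp : Treeish p) (b : Fin (n+1)) {v : Fin n}
    (h : v ∉ spineSet hp b) : psiF hp b v = p v := dif_neg h

lemma psiF_cyc (hp : Treeish p) (b : Fin (n+1)) :
    ∀ v, Cyc (psiF hp b) v ↔ v ∈ spineSet hp b := by
  apply cyc_iff_mem hp
  · exact fun v h => psiF_not_mem hp b h
  · intro v hv
    obtain ⟨hr, heq⟩ := psiF_mem hp b hv
    exact ⟨spineF hp b _ hr, mem_spineSet.mpr ⟨_, hr, rfl⟩, heq⟩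
  · intro v hv w hw h
    obtain ⟨hrv, heqv⟩ := psiF_mem hp b hv
    obtain ⟨hrw, heqw⟩ := psiF_mem hp b hw
    rw [heqv, heqw] at h
    have := spineF_inj hp b hrv hrw (Fin.castSucc_injective n h)
    have h2 : (((spineSet hp b).orderIsoOfFin rfl).symm ⟨v, hv⟩) =
        (((spineSet hp b).orderIsoOfFin rfl).symm ⟨w, hw⟩) := Fin.ext this
    have h3 := congrArg ((spineSet hp b).orderIsoOfFin rfl) h2
    rw [OrderIso.apply_symm_apply, OrderIso.apply_symm_apply] at h3
    exact congrArg Subtype.val h3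

lemma cycSet_psiF (hp : Treeish p) (b : Fin (n+1)) :
    cycSet (psiF hp b) = spineSet hp b := by
  ext v
  rw [mem_cycSet]
  exact psiF_cyc hp b v

lemma cycSet_psiF_card (hp : Treeish p) (b : Fin (n+1)) :
    (cycSet (psiF hp b)).card = depth hp b := by
  rw [cycSet_psiF hp b, spineSet_card hp b]

lemma uF_psiF (hp : Treeish p) (b : Fin (n+1)) (j : ℕ)
    (hj : j < (cycSet (psiF hp b)).card) (hj' : j < depth hp b) :
    uF (psiF hp b) ⟨j, hj⟩ = spineF hp b j hj' := by
  set i : Fin (cycSet (psiF hp b)).card := ⟨j, hj⟩ with hidef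
  have hwmemC : ((cycEnum (psiF hp b)) i).1 ∈ cycSet (psiF hp b) := ((cycEnum (psiF hp b)) i).2
  have hwmemS : ((cycEnum (psiF hp b)) i).1 ∈ spineSet hp b :=
    (psiF_cyc hp b _).mp ((mem_cycSet (psiF hp b)).mp hwmemC)
  obtain ⟨hr, heq⟩ := psiF_mem hp b hwmemS
  have e1 : (((spineSet hp b).orderIsoOfFin rfl).symm ⟨((cycEnum (psiF hp b)) i).1, hwmemS⟩ : ℕ)
      = (((cycSet (psiF hp b)).orderIsoOfFin rfl).symm ⟨((cycEnum (psiF hp b)) i).1, hwmemC⟩ : ℕ) :=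
    orderIso_symm_coe_congr (cycSet_psiF hp b).symm hwmemS hwmemC
  have e2 : (((cycSet (psiF hp b)).orderIsoOfFin rfl).symm
      ⟨((cycEnum (psiF hp b)) i).1, hwmemC⟩ : ℕ) = (i : ℕ) := by
    have hsub : (⟨((cycEnum (psiF hp b)) i).1, hwmemC⟩ : {v // v ∈ cycSet (psiF hp b)})
        = (cycEnum (psiF hp b)) i := Subtype.ext rfl
    rw [hsub]
    exact congrArg Fin.val ((cycEnum (psiF hp b)).symm_apply_apply i)
  have hidx : (((spineSet hp b).orderIsoOfFin rfl).symm
      ⟨((cycEnum (psiF hp b)) i).1, hwmemS⟩ : ℕ) = j := e1.trans e2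
  have hfw : psiF hp b ((cycEnum (psiF hp b)) i).1 = Fin.castSucc (spineF hp b j hj') := by
    rw [heq]
    exact congrArg Fin.castSucc (spineF_congr hp b hidx hr hj')
  have hc : Fin.castSucc (uF (psiF hp b) i) = psiF hp b ((cycEnum (psiF hp b)) i).1 :=
    castSucc_uF (psiF hp b) i
  rw [hfw] at hc
  exact Fin.castSucc_injective n hc

lemma phiP_uF' (f : Fin n → Fin (n+1)) (j : ℕ) (hj : j < (cycSet f).card) :
    phiP f (uF f ⟨j, hj⟩) = if j = 0 then Fin.last n
      else Fin.castSucc (uF f ⟨j - 1, by omega⟩) :=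
  phiP_uF f ⟨j, hj⟩

lemma phiP_psiF (hp : Treeish p) (b : Fin (n+1)) : phiP (psiF hp b) = p := by
  funext v
  by_cases hv : v ∈ spineSet hp b
  · obtain ⟨j, hj, hvj⟩ := mem_spineSet.mp hv
    have hjc : j < (cycSet (psiF hp b)).card := by
      have := cycSet_psiF_card hp b; omega
    have huFj : uF (psiF hp b) ⟨j, hjc⟩ = v := by
      rw [uF_psiF hp b j hjc hj, hvj]
    rw [← huFj, phiP_uF' (psiF hp b) j hjc, huFj]
    cases j with
    | zero =>
      rw [if_pos rfl, ← hvj]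
      exact (p_spineF_zero hp b (by omega)).symm
    | succ j' =>
      rw [if_neg (Nat.succ_ne_zero j'), ← hvj,
        p_spineF_succ hp b (show j' + 1 < depth hp b from hj)]
      refine congrArg Fin.castSucc ?_
      rw [uF_psiF hp b (j' + 1 - 1) (by omega) (by omega)]
      exact spineF_congr hp b (by omega) _ _
  · rw [phiP_not_mem (psiF hp b) (by rwa [cycSet_psiF hp b]), psiF_not_mem hp b hv]

lemma phiB_psiF (hp : Treeish p) (b : Fin (n+1)) : phiB (psiF hp b) = b := by
  by_cases ht : 0 < depth hp b
  · rw [phiB, dif_pos (show 0 < (cycSet (psiF hp b)).card by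
      rw [cycSet_psiF_card hp b]; omega)]
    rw [uF_psiF hp b ((cycSet (psiF hp b)).card - 1)
      (by rw [cycSet_psiF_card hp b]; omega)
      (by rw [cycSet_psiF_card hp b]; omega)]
    refine Eq.trans (congrArg Fin.castSucc
      (spineF_congr hp b (by rw [cycSet_psiF_card hp b]) _ (by omega))) ?_
    exact spineF_last hp b ht
  · rw [phiB, dif_neg (show ¬ 0 < (cycSet (psiF hp b)).card by
      rw [cycSet_psiF_card hp b]; omega)]
    exact (depth_zero_eq_last hp (by omega)).symm

end RoundTrips

section RoundTripB

open scoped Classical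

variable (f : Fin n → Fin (n+1))

lemma depth_phiP_uF (i : Fin (cycSet f).card) :
    depth (treeish_phiP f) (Fin.castSucc (uF f i)) = (i : ℕ) + 1 := by
  apply Nat.le_antisymm
  · exact depth_le _ (phiP_chain_last f i)
  · apply le_depth
    intro j hj hlast
    rw [phiP_chain f i j (by omega)] at hlast
    exact castSucc_ne_last _ hlast

lemma depth_phiB : depth (treeish_phiP f) (phiB f) = (cycSet f).card := by
  by_cases ht : 0 < (cycSet f).card
  · rw [phiB, dif_pos ht, depth_phiP_uF]
    simp
    omega
  · rw [phiB, dif_neg ht, depth_last]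
    omega

lemma spineF_phiB (j : ℕ) (hj : j < depth (treeish_phiP f) (phiB f)) :
    ∃ hj' : j < (cycSet f).card,
      spineF (treeish_phiP f) (phiB f) j hj = uF f ⟨j, hj'⟩ := by
  have hd := depth_phiB f
  have hj' : j < (cycSet f).card := by omega
  refine ⟨hj', ?_⟩
  have ht : 0 < (cycSet f).card := by omega
  have hb : phiB f = Fin.castSucc (uF f ⟨(cycSet f).card - 1, by omega⟩) := dif_pos ht
  have hchain := phiP_chain f ⟨(cycSet f).card - 1, by omega⟩
    (((cycSet f).card - 1) - j) (Nat.sub_le _ _)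
  have hsn : spineN (treeish_phiP f) (phiB f) j = Fin.castSucc (uF f ⟨j, hj'⟩) := by
    rw [spineN, hd, hb, hchain]
    refine congrArg Fin.castSucc (congrArg (uF f) (Fin.ext ?_))
    simp
    omega
  apply Fin.castSucc_injective
  rw [spineF, Fin.castSucc_castPred, hsn]

lemma spineSet_phiB : spineSet (treeish_phiP f) (phiB f) = cycSet f := by
  ext v
  rw [mem_spineSet]
  constructor
  · rintro ⟨j, hj, rfl⟩
    obtain ⟨hj', heq⟩ := spineF_phiB f j hj
    rw [heq]
    exact uF_mem f _
  · intro hv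
    obtain ⟨i, hi⟩ := uF_surj f hv
    have hd := depth_phiB f
    refine ⟨(i : ℕ), by omega, ?_⟩
    obtain ⟨hj', heq⟩ := spineF_phiB f (i : ℕ) (by omega)
    rw [heq, Fin.eta, hi]

lemma psiF_phiP : psiF (treeish_phiP f) (phiB f) = f := by
  funext v
  by_cases hv : v ∈ spineSet (treeish_phiP f) (phiB f)
  · obtain ⟨hr, heq⟩ := psiF_mem _ _ hv
    rw [heq]
    obtain ⟨hj', heq2⟩ := spineF_phiB f _ hr
    rw [heq2]
    have hvC : v ∈ cycSet f := by rw [← spineSet_phiB f]; exact hv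
    have e1 : (((spineSet (treeish_phiP f) (phiB f)).orderIsoOfFin rfl).symm ⟨v, hv⟩ : ℕ)
        = (((cycSet f).orderIsoOfFin rfl).symm ⟨v, hvC⟩ : ℕ) :=
      orderIso_symm_coe_congr (spineSet_phiB f) hv hvC
    have hidx : (⟨(((spineSet (treeish_phiP f) (phiB f)).orderIsoOfFin rfl).symm ⟨v, hv⟩ : ℕ),
        hj'⟩ : Fin (cycSet f).card) = (cycEnum f).symm ⟨v, hvC⟩ := Fin.ext e1
    rw [hidx, castSucc_uF]
    rw [show (cycEnum f) ((cycEnum f).symm ⟨v, hvC⟩) = ⟨v, hvC⟩ from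
      OrderIso.apply_symm_apply _ _]
  · rw [psiF_not_mem _ _ hv]
    refine phiP_not_mem f ?_
    rw [← spineSet_phiB f]
    exact hv

end RoundTripB

/-- Step B: the Joyal bijection. -/
noncomputable def equivB (n : ℕ) :
    (Fin n → Fin (n+1)) ≃ ({p : Fin n → Fin (n+1) // Treeish p} × Fin (n+1)) where
  toFun f := (⟨phiP f, treeish_phiP f⟩, phiB f)
  invFun x := psiF x.1.2 x.2
  left_inv f := psiF_phiP f
  right_inv := by
    rintro ⟨⟨p, hp⟩, b⟩
    simp only [Prod.mk.injEq, Subtype.mk.injEq]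
    exact ⟨phiP_psiF hp b, phiB_psiF hp b⟩

end StmtAux

/-- `rootedForests n k` is the number of rooted forests on `n` labeled vertices
with exactly `k` rooted trees. -/
noncomputable def rootedForests (n k : ℕ) : ℕ :=
  Nat.card {F : SimpleGraph (Fin n) × Finset (Fin n) //
    F.1.IsAcyclic ∧
    (∀ c : F.1.ConnectedComponent, ∃! v, v ∈ F.2 ∧ F.1.connectedComponentMk v = c) ∧
    F.2.card = k}

/-- The number of rooted labeled forests on `n` vertices (with any number of
components) equals `(n+1)^(n-1)`. -/
theorem stmt_12 (n : ℕ) :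
    ∑ k ∈ Finset.range (n + 1), rootedForests n k = (n + 1) ^ (n - 1) := by
  classical
  let Full := {F : SimpleGraph (Fin n) × Finset (Fin n) //
    F.1.IsAcyclic ∧
    (∀ c : F.1.ConnectedComponent, ∃! v, v ∈ F.2 ∧ F.1.connectedComponentMk v = c)}
  have hlt : ∀ F : Full, F.1.2.card < n + 1 := fun F =>
    Nat.lt_succ_of_le (by simpa using Finset.card_le_univ F.1.2)
  let idx : Full → Fin (n+1) := fun F => ⟨F.1.2.card, hlt F⟩
  have e1 : (Σ b : Fin (n+1), {F : Full // idx F = b}) ≃ Full := Equiv.sigmaFiberEquiv idx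
  have e2 : ∀ b : Fin (n+1), {F : Full // idx F = b} ≃
      {F : SimpleGraph (Fin n) × Finset (Fin n) //
        F.1.IsAcyclic ∧
        (∀ c : F.1.ConnectedComponent, ∃! v, v ∈ F.2 ∧ F.1.connectedComponentMk v = c) ∧
        F.2.card = (b : ℕ)} := by
    intro b
    refine (Equiv.subtypeEquivRight ?_).trans
      ((Equiv.subtypeSubtypeEquivSubtypeInter _ (fun F => F.2.card = (b : ℕ))).trans
        (Equiv.subtypeEquivRight ?_))
    · intro F
      exact Fin.ext_iff
    · intro F
      tauto
  have hcard : ∀ k : Fin (n+1), rootedForests n (k : ℕ) = Nat.card {F : Full // idx F = k} :=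
    fun k => (Nat.card_congr (e2 k)).symm
  have hsum : ∑ k ∈ Finset.range (n + 1), rootedForests n k = Nat.card Full := by
    rw [← Fin.sum_univ_eq_sum_range (fun k => rootedForests n k) (n+1)]
    rw [← Nat.card_congr e1]
    haveI : Fintype Full := Fintype.ofFinite _
    haveI : ∀ b : Fin (n+1), Fintype {F : Full // idx F = b} := fun b => Fintype.ofFinite _
    rw [Nat.card_eq_fintype_card, Fintype.card_sigma]
    refine Finset.sum_congr rfl fun k _ => ?_
    rw [hcard k, Nat.card_eq_fintype_card]
  have hA : Nat.card Full = Nat.card {p : Fin n → Fin (n+1) // StmtAux.Treeish p} :=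
    (Nat.card_congr (StmtAux.equivA n)).symm
  have hB : (n+1)^n = Nat.card {p : Fin n → Fin (n+1) // StmtAux.Treeish p} * (n+1) := by
    have h := Nat.card_congr (StmtAux.equivB n)
    rw [Nat.card_eq_fintype_card, Fintype.card_fun, Fintype.card_fin, Fintype.card_fin,
      Nat.card_prod] at h
    simpa [Nat.card_eq_fintype_card] using h
  rw [hsum, hA]
  have hpow : (n+1)^(n-1) * (n+1) = (n+1)^n := by
    cases n with
    | zero => simp
    | succ m => rw [Nat.succ_sub_one, ← pow_succ]
  apply Nat.eq_of_mul_eq_mul_right (Nat.succ_pos n)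
  rw [hpow]
  exact hB.symm
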